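/- Let A be a nonnegative n×n real matrix and (y,z) ∈ ℝ^n × ℝ^n. Then (y,z) is a global minimizer of f over ℝ^n × ℝ^n if and only if the scaled matrix A(y,z) = diag(e^y) A diag(e^z) (entries A_{ij} e^{y_i+z_j}) is doubly stochastic, i.e., all of its row sums and column sums equal 1. -/

import Mathlib

open Finset

private lemma key5 (r : ℝ) (h : ∀ t : ℝ, t ≤ (Real.exp t - 1) * r) : r = 1 := by
  have hr : 0 < r := by
    have h1 := h 1
    nlinarith [Real.add_one_le_exp (1 : ℝ)]
  by_contra hne
  have h2 := h (-Real.log r)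
  rw [Real.exp_neg, Real.exp_log hr] at h2
  have h3 := Real.log_lt_sub_one_of_pos hr hne
  have h4 : r⁻¹ * r = 1 := inv_mul_cancel₀ (ne_of_gt hr)
  nlinarith

private lemma sum_perturb5 (n : ℕ) (r : Fin n → ℝ) (i₀ : Fin n) (t : ℝ) :
    ∑ i, Real.exp (if i = i₀ then t else 0) * r i
      = (∑ i, r i) + (Real.exp t - 1) * r i₀ := by
  have h : ∀ i ∈ Finset.univ, Real.exp (if i = i₀ then t else 0) * r i
      = r i + (if i = i₀ then (Real.exp t - 1) * r i₀ else 0) := by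
    intro i _
    by_cases hi : i = i₀
    · subst hi; simp; ring
    · simp [hi]
  rw [Finset.sum_congr rfl h, Finset.sum_add_distrib]
  congr 1
  simp [Finset.sum_ite_eq']

/-- `(y,z)` is a global minimizer of
`f(y,z) = Σ A_{ij} e^{y_i+z_j} − Σ y_i − Σ z_j` if and only if the scaled matrix
with entries `A_{ij} e^{y_i+z_j}` is doubly stochastic. -/
theorem stmt5 (n : ℕ) (A : Matrix (Fin n) (Fin n) ℝ) (hA : ∀ i j, 0 ≤ A i j)
    (y z : Fin n → ℝ) :
    (∀ y' z' : Fin n → ℝ,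
        (∑ i, ∑ j, A i j * Real.exp (y i + z j)) - (∑ i, y i) - (∑ j, z j) ≤
          (∑ i, ∑ j, A i j * Real.exp (y' i + z' j)) - (∑ i, y' i) - ∑ j, z' j)
    ↔ ((∀ i, ∑ j, A i j * Real.exp (y i + z j) = 1)
        ∧ ∀ j, ∑ i, A i j * Real.exp (y i + z j) = 1) := by
  constructor
  · intro hmin
    constructor
    · intro i₀
      apply key5
      intro t
      have h := hmin (fun i => y i + if i = i₀ then t else 0) z
      have e1 : ∑ i, ∑ j, A i j * Real.exp ((y i + if i = i₀ then t else 0) + z j)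
          = (∑ i, ∑ j, A i j * Real.exp (y i + z j))
            + (Real.exp t - 1) * ∑ j, A i₀ j * Real.exp (y i₀ + z j) := by
        rw [← sum_perturb5 n (fun i => ∑ j, A i j * Real.exp (y i + z j)) i₀ t]
        refine Finset.sum_congr rfl fun i _ => ?_
        rw [Finset.mul_sum]
        refine Finset.sum_congr rfl fun j _ => ?_
        rw [show (y i + if i = i₀ then t else 0) + z j
            = (if i = i₀ then t else 0) + (y i + z j) by ring, Real.exp_add]
        ring
      have e2 : ∑ i, (y i + if i = i₀ then t else 0) = (∑ i, y i) + t := by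
        rw [Finset.sum_add_distrib]
        simp [Finset.sum_ite_eq']
      rw [e1, e2] at h
      linarith
    · intro j₀
      apply key5
      intro t
      have h := hmin y (fun j => z j + if j = j₀ then t else 0)
      have e1 : ∑ i, ∑ j, A i j * Real.exp (y i + (z j + if j = j₀ then t else 0))
          = (∑ i, ∑ j, A i j * Real.exp (y i + z j))
            + (Real.exp t - 1) * ∑ i, A i j₀ * Real.exp (y i + z j₀) := by
        calc ∑ i, ∑ j, A i j * Real.exp (y i + (z j + if j = j₀ then t else 0))
            = ∑ j, Real.exp (if j = j₀ then t else 0)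
                * ∑ i, A i j * Real.exp (y i + z j) := by
              rw [Finset.sum_comm]
              refine Finset.sum_congr rfl fun j _ => ?_
              rw [Finset.mul_sum]
              refine Finset.sum_congr rfl fun i _ => ?_
              rw [show y i + (z j + if j = j₀ then t else 0)
                  = (if j = j₀ then t else 0) + (y i + z j) by ring, Real.exp_add]
              ring
          _ = (∑ j, ∑ i, A i j * Real.exp (y i + z j))
                + (Real.exp t - 1) * ∑ i, A i j₀ * Real.exp (y i + z j₀) :=
              sum_perturb5 n (fun j => ∑ i, A i j * Real.exp (y i + z j)) j₀ t
          _ = (∑ i, ∑ j, A i j * Real.exp (y i + z j))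
                + (Real.exp t - 1) * ∑ i, A i j₀ * Real.exp (y i + z j₀) := by
              congr 1
              exact Finset.sum_comm
      have e2 : ∑ j, (z j + if j = j₀ then t else 0) = (∑ j, z j) + t := by
        rw [Finset.sum_add_distrib]
        simp [Finset.sum_ite_eq']
      rw [e1, e2] at h
      linarith
  · rintro ⟨hrow, hcol⟩ y' z'
    have hterm : ∀ i j, A i j * Real.exp (y i + z j)
          * (1 + ((y' i - y i) + (z' j - z j)))
        ≤ A i j * Real.exp (y' i + z' j) := by
      intro i j
      have h1 : A i j * Real.exp (y' i + z' j)
          = A i j * Real.exp (y i + z j)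
            * Real.exp ((y' i - y i) + (z' j - z j)) := by
        rw [mul_assoc, ← Real.exp_add]; ring_nf
      rw [h1]
      have h2 : (1 : ℝ) + ((y' i - y i) + (z' j - z j))
          ≤ Real.exp ((y' i - y i) + (z' j - z j)) := by
        have := Real.add_one_le_exp ((y' i - y i) + (z' j - z j))
        linarith
      have h3 : 0 ≤ A i j * Real.exp (y i + z j) :=
        mul_nonneg (hA i j) (Real.exp_pos _).le
      exact mul_le_mul_of_nonneg_left h2 h3
    have hsum : ∑ i, ∑ j, A i j * Real.exp (y i + z j)
            * (1 + ((y' i - y i) + (z' j - z j)))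
        ≤ ∑ i, ∑ j, A i j * Real.exp (y' i + z' j) :=
      Finset.sum_le_sum fun i _ => Finset.sum_le_sum fun j _ => hterm i j
    have hexp : ∑ i, ∑ j, A i j * Real.exp (y i + z j)
            * (1 + ((y' i - y i) + (z' j - z j)))
        = (∑ i, ∑ j, A i j * Real.exp (y i + z j))
          + (∑ i, (y' i - y i)) + (∑ j, (z' j - z j)) := by
      have split : ∀ i j, A i j * Real.exp (y i + z j)
            * (1 + ((y' i - y i) + (z' j - z j)))
          = A i j * Real.exp (y i + z j)
            + A i j * Real.exp (y i + z j) * (y' i - y i)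
            + A i j * Real.exp (y i + z j) * (z' j - z j) := by
        intro i j; ring
      simp_rw [split, Finset.sum_add_distrib]
      congr 1
      · congr 1
        refine Finset.sum_congr rfl fun i _ => ?_
        rw [← Finset.sum_mul, hrow i, one_mul]
      · rw [Finset.sum_comm]
        refine Finset.sum_congr rfl fun j _ => ?_
        rw [← Finset.sum_mul, hcol j, one_mul]
    rw [hexp] at hsum
    have hy : ∑ i, (y' i - y i) = (∑ i, y' i) - ∑ i, y i := Finset.sum_sub_distrib y' y
    have hz : ∑ j, (z' j - z j) = (∑ j, z' j) - ∑ j, z j := Finset.sum_sub_distrib z' z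
    rw [hy, hz] at hsum
    linarith
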